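/- If φ avoids Ω, then the space Z²_1 of 2-cocycles on F_φ of degree 1 has dimension 2(p−1); explicitly, it is spanned by the cochains ψ^1_{2,j} (3 ≤ j ≤ 2p) determined by ψ^1_{2,j}(X_2, X_j) = X_1 and ψ^1_{2,j} = 0 on all other pairs of basis vectors. -/

import Mathlib

open scoped BigOperators

noncomputable section

/-- The underlying space ℂ^{2p} of the Lie algebra `F_φ`. -/
abbrev V (p : ℕ) : Type := Fin (2*p) → ℂ

/-- The space of bilinear maps ℂ^{2p} × ℂ^{2p} → ℂ^{2p}. -/
abbrev Bil (p : ℕ) : Type := V p →ₗ[ℂ] V p →ₗ[ℂ] V p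

/-- The basis vector `X j` (1-indexed, j = 1, …, 2p). -/
def X (p j : ℕ) : V p := fun i => if (i : ℕ) + 1 = j then 1 else 0

/-- The coordinate functional dual to `X j` (1-indexed). -/
def coordL (p j : ℕ) : V p →ₗ[ℂ] ℂ :=
  if h : j - 1 < 2*p then LinearMap.proj (⟨j - 1, h⟩ : Fin (2*p)) else 0

/-- The elementary alternating bilinear map `(x,y) ↦ (x_a y_b − x_b y_a) • v`
(indices 1-based). -/
def elem (p a b : ℕ) (v : V p) : Bil p :=
  (coordL p a).smulRight ((coordL p b).smulRight v)
    - (coordL p b).smulRight ((coordL p a).smulRight v)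

/-- The Lie bracket of the frobeniusian model algebra `F_φ`:
`[X_1,X_2] = −X_1`, `[X_{2k+1},X_{2k+2}] = −X_1`, `[X_2,X_{2k+1}] = −φ_k X_{2k+1}`,
`[X_2,X_{2k+2}] = (1+φ_k) X_{2k+2}` for `1 ≤ k ≤ p−1`. -/
def mu (p : ℕ) (φ : ℕ → ℂ) : Bil p :=
  elem p 1 2 (-(X p 1)) +
    ∑ k ∈ Finset.Icc 1 (p-1),
      (elem p (2*k+1) (2*k+2) (-(X p 1)) + elem p 2 (2*k+1) (-(φ k) • X p (2*k+1))
        + elem p 2 (2*k+2) ((1 + φ k) • X p (2*k+2)))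

/-- `φ` avoids the set `Ω₁`. -/
def AvoidsOmega1 (p : ℕ) (φ : ℕ → ℂ) : Prop :=
  ∀ i j : ℕ, 1 ≤ i → i ≤ p - 1 → 1 ≤ j → j ≤ p - 1 →
    1 + φ i + φ j ≠ 0 ∧ 2 + φ i + φ j ≠ 0 ∧ (i ≠ j → φ i ≠ φ j) ∧
      φ i ≠ 0 ∧ φ i ≠ -1 ∧ 2 * φ i + 1 ≠ 0

/-- `φ` avoids the set `Ω = Ω₁ ∪ Ω₂`. -/
def AvoidsOmega (p : ℕ) (φ : ℕ → ℂ) : Prop :=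
  AvoidsOmega1 p φ ∧
    ∀ i j : ℕ, 1 ≤ i → i ≤ p - 1 → 1 ≤ j → j ≤ p - 1 →
      (i ≠ j → 1 + φ i - φ j ≠ 0) ∧ φ i + φ j ≠ 0 ∧ 2 + φ i ≠ 0 ∧ 1 - φ i ≠ 0 ∧
        1 + 2*φ i - φ j ≠ 0 ∧ 1 + 2*φ i + φ j ≠ 0 ∧ 2*φ i - φ j ≠ 0 ∧ 2 + 2*φ i + φ j ≠ 0

/-- The space of derivations of a bilinear bracket `B` on `ℂ^{2p}`. -/
def derSub (p : ℕ) (B : Bil p) : Submodule ℂ (V p →ₗ[ℂ] V p) where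
  carrier := {D | ∀ x y, D (B x y) = B (D x) y + B x (D y)}
  add_mem' := by
    intro D E hD hE x y
    simp only [LinearMap.add_apply, hD x y, hE x y, map_add, LinearMap.add_apply]
    abel
  zero_mem' := by intro x y; simp
  smul_mem' := by
    intro c D hD x y
    simp only [LinearMap.smul_apply, hD x y, map_smul, LinearMap.map_smul₂,
      LinearMap.smul_apply, smul_add]

/-- The grading subspaces: `g_0 = ℂ X_2`, `g_1 = ⟨X_3,…,X_{2p}⟩`, `g_2 = ℂ X_1`,
and `g_m = 0` otherwise. -/
def gr (p : ℕ) : ℤ → Submodule ℂ (V p) := fun m =>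
  if m = 0 then Submodule.span ℂ {X p 2}
  else if m = 1 then Submodule.span ℂ {v | ∃ j, 3 ≤ j ∧ j ≤ 2*p ∧ v = X p j}
  else if m = 2 then Submodule.span ℂ {X p 1}
  else ⊥

/-- The space of 2-cocycles of `F_φ` with coefficients in the adjoint module
(2-cochains are alternating bilinear maps). -/
def Z2 (p : ℕ) (φ : ℕ → ℂ) : Submodule ℂ (Bil p) where
  carrier := {ψ | (∀ x, ψ x x = 0) ∧
    ∀ x y z, mu p φ x (ψ y z) - mu p φ y (ψ x z) + mu p φ z (ψ x y)
      - ψ (mu p φ x y) z + ψ (mu p φ x z) y - ψ (mu p φ y z) x = 0}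
  add_mem' := by
    rintro ψ₁ ψ₂ ⟨h₁a, h₁c⟩ ⟨h₂a, h₂c⟩
    constructor
    · intro x; simp [h₁a x, h₂a x]
    · intro x y z
      have e₁ := h₁c x y z
      have e₂ := h₂c x y z
      simp only [LinearMap.add_apply, map_add]
      rw [← sub_eq_zero] at *
      simp only [sub_zero] at *
      linear_combination (norm := module) e₁ + e₂
  zero_mem' := by
    constructor
    · intro x; simp
    · intro x y z; simp
  smul_mem' := by
    rintro c ψ ⟨ha, hc⟩
    constructor
    · intro x; simp [ha x]
    · intro x y z
      have e := hc x y z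
      simp only [LinearMap.smul_apply, map_smul]
      linear_combination (norm := module) c • e

/-- The space of 2-coboundaries of `F_φ` with coefficients in the adjoint module. -/
def B2 (p : ℕ) (φ : ℕ → ℂ) : Submodule ℂ (Bil p) where
  carrier := {ψ | ∃ f : V p →ₗ[ℂ] V p,
    ∀ x y, ψ x y = mu p φ x (f y) - mu p φ y (f x) - f (mu p φ x y)}
  add_mem' := by
    rintro ψ₁ ψ₂ ⟨f₁, h₁⟩ ⟨f₂, h₂⟩
    refine ⟨f₁ + f₂, fun x y => ?_⟩
    simp only [LinearMap.add_apply, h₁ x y, h₂ x y, map_add]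
    abel
  zero_mem' := ⟨0, by intro x y; simp⟩
  smul_mem' := by
    rintro c ψ ⟨f, h⟩
    refine ⟨c • f, fun x y => ?_⟩
    simp only [LinearMap.smul_apply, h x y, map_smul, smul_sub]

/-- The 2-cochains of degree `k` with respect to the grading `gr`. -/
def degSub (p : ℕ) (k : ℤ) : Submodule ℂ (Bil p) where
  carrier := {ψ | ∀ (a b : ℤ), ∀ x ∈ gr p a, ∀ y ∈ gr p b, ψ x y ∈ gr p (a + b + k)}
  add_mem' := by
    intro ψ₁ ψ₂ h₁ h₂ a b x hx y hy
    simpa using Submodule.add_mem _ (h₁ a b x hx y hy) (h₂ a b x hx y hy)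
  zero_mem' := by intro a b x hx y hy; simp
  smul_mem' := by
    intro c ψ h a b x hx y hy
    simpa using Submodule.smul_mem _ c (h a b x hx y hy)

attribute [local instance] LieRing.ofAssociativeRing

/-- The derivations of `F_φ` as a Lie subalgebra of `End(ℂ^{2p})`. -/
def derLie (p : ℕ) (φ : ℕ → ℂ) : LieSubalgebra ℂ (Module.End ℂ (V p)) :=
  { derSub p (mu p φ) with
    lie_mem' := by
      intro D E hD hE
      have hD' : ∀ x y, D (mu p φ x y) = mu p φ (D x) y + mu p φ x (D y) := hD
      have hE' : ∀ x y, E (mu p φ x y) = mu p φ (E x) y + mu p φ x (E y) := hE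
      intro x y
      simp only [Ring.lie_def, LinearMap.sub_apply, Module.End.mul_apply]
      rw [hE' x y, hD' x y, map_add, map_add, hD' (E x) y, hD' x (E y),
        hE' (D x) y, hE' x (D y)]
      simp only [map_sub, LinearMap.sub_apply]
      abel }

/-- The derivation `f_i` of `F_φ` : `f_i(X_{2i+1}) = X_{2i+1}`, `f_i(X_{2i+2}) = −X_{2i+2}`. -/
def fDer (p i : ℕ) : V p →ₗ[ℂ] V p :=
  (coordL p (2*i+1)).smulRight (X p (2*i+1)) - (coordL p (2*i+2)).smulRight (X p (2*i+2))

/-- The 2-cocycle `ψ_k = ψ^{2k+1}_{2,2k+1}` :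
`(X_2,X_{2k+1}) ↦ X_{2k+1}`, `(X_2,X_{2k+2}) ↦ −X_{2k+2}`. -/
def psiK (p k : ℕ) : Bil p :=
  elem p 2 (2*k+1) (X p (2*k+1)) - elem p 2 (2*k+2) (X p (2*k+2))

/-- The 2-cocycle `ψ^2_{12}` spanning `Z²_{−2}`. -/
def psiM2 (p : ℕ) (φ : ℕ → ℂ) : Bil p :=
  elem p 1 2 (X p 2) +
    ∑ k ∈ Finset.Icc 1 (p-1),
      (elem p (2*k+1) (2*k+2) (X p 2) + elem p 1 (2*k+1) (-(φ k) • X p (2*k+1))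
        + elem p 1 (2*k+2) ((1 + φ k) • X p (2*k+2)))

/-- The 2-cocycle `ψ^1_{2,j}` : `(X_2,X_j) ↦ X_1`. -/
def psiTop (p j : ℕ) : Bil p := elem p 2 j (X p 1)


/-! ### Plain-function versions of the relevant spaces.
We realise spaces of (multi)linear maps as submodules of plain function spaces,
the (bi)linearity being part of the defining conditions. -/

/-- `ψ : ℂ^{2p} × ℂ^{2p} → ℂ^{2p}` is bilinear. -/
def IsBil (p : ℕ) (ψ : V p → V p → V p) : Prop :=
  (∀ x x' y, ψ (x + x') y = ψ x y + ψ x' y) ∧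
  (∀ (c : ℂ) (x y), ψ (c • x) y = c • ψ x y) ∧
  (∀ x y y', ψ x (y + y') = ψ x y + ψ x y') ∧
  (∀ (c : ℂ) (x y), ψ x (c • y) = c • ψ x y)

/-- The space of derivations of a bilinear bracket `B` on `ℂ^{2p}`, realised inside
the space of all maps `ℂ^{2p} → ℂ^{2p}` (linearity is part of the conditions). -/
def derF (p : ℕ) (B : Bil p) : Submodule ℂ (V p → V p) where
  carrier := {D | (∀ x y, D (x + y) = D x + D y) ∧ (∀ (c : ℂ) (x), D (c • x) = c • D x) ∧
    ∀ x y, D (B x y) = B (D x) y + B x (D y)}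
  add_mem' := by
    rintro D E ⟨hDa, hDs, hDd⟩ ⟨hEa, hEs, hEd⟩
    refine ⟨fun x y => ?_, fun c x => ?_, fun x y => ?_⟩
    · simp only [Pi.add_apply, hDa, hEa]; abel
    · simp only [Pi.add_apply, hDs, hEs, smul_add]
    · simp only [Pi.add_apply, hDd x y, hEd x y, map_add, LinearMap.add_apply]; abel
  zero_mem' := by
    refine ⟨fun x y => ?_, fun c x => ?_, fun x y => ?_⟩ <;> simp
  smul_mem' := by
    rintro c D ⟨hDa, hDs, hDd⟩
    refine ⟨fun x y => ?_, fun c' x => ?_, fun x y => ?_⟩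
    · simp only [Pi.smul_apply, hDa, smul_add]
    · simp only [Pi.smul_apply, hDs, smul_comm c c']
    · simp only [Pi.smul_apply, hDd x y, map_smul, LinearMap.smul_apply, smul_add]

/-- The space of inner derivations `ad(v) = B(v,·)` of a bilinear bracket `B`. -/
def innerF (p : ℕ) (B : Bil p) : Submodule ℂ (V p → V p) where
  carrier := {D | ∃ v, D = fun y => B v y}
  add_mem' := by
    rintro D E ⟨v, rfl⟩ ⟨w, rfl⟩
    exact ⟨v + w, by funext y; simp [map_add]⟩
  zero_mem' := ⟨0, by funext y; simp⟩
  smul_mem' := by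
    rintro c D ⟨v, rfl⟩
    exact ⟨c • v, by funext y; simp [map_smul]⟩

/-- The space of 2-cocycles of `F_φ` with coefficients in the adjoint module;
2-cochains are alternating bilinear maps `ℂ^{2p} × ℂ^{2p} → ℂ^{2p}`. -/
def Z2F (p : ℕ) (φ : ℕ → ℂ) : Submodule ℂ (V p → V p → V p) where
  carrier := {ψ | IsBil p ψ ∧ (∀ x, ψ x x = 0) ∧
    ∀ x y z, mu p φ x (ψ y z) - mu p φ y (ψ x z) + mu p φ z (ψ x y)
      - ψ (mu p φ x y) z + ψ (mu p φ x z) y - ψ (mu p φ y z) x = 0}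
  add_mem' := by
    rintro ψ₁ ψ₂ ⟨⟨hb₁, hb₂, hb₃, hb₄⟩, ha, hc⟩ ⟨⟨hb₁', hb₂', hb₃', hb₄'⟩, ha', hc'⟩
    refine ⟨⟨fun x x' y => ?_, fun c x y => ?_, fun x y y' => ?_, fun c x y => ?_⟩,
      fun x => ?_, fun x y z => ?_⟩
    · simp only [Pi.add_apply, hb₁, hb₁']; abel
    · simp only [Pi.add_apply, hb₂, hb₂', smul_add]
    · simp only [Pi.add_apply, hb₃, hb₃']; abel
    · simp only [Pi.add_apply, hb₄, hb₄', smul_add]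
    · simp only [Pi.add_apply, ha x, ha' x]; abel
    · have e := hc x y z
      have e' := hc' x y z
      simp only [Pi.add_apply, map_add]
      linear_combination (norm := module) e + e'
  zero_mem' := by
    refine ⟨⟨fun x x' y => ?_, fun c x y => ?_, fun x y y' => ?_, fun c x y => ?_⟩,
      fun x => ?_, fun x y z => ?_⟩ <;> simp
  smul_mem' := by
    rintro c ψ ⟨⟨hb₁, hb₂, hb₃, hb₄⟩, ha, hc⟩
    refine ⟨⟨fun x x' y => ?_, fun c' x y => ?_, fun x y y' => ?_, fun c' x y => ?_⟩,
      fun x => ?_, fun x y z => ?_⟩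
    · simp only [Pi.smul_apply, hb₁, smul_add]
    · simp only [Pi.smul_apply, hb₂, smul_comm c c']
    · simp only [Pi.smul_apply, hb₃, smul_add]
    · simp only [Pi.smul_apply, hb₄, smul_comm c c']
    · simp only [Pi.smul_apply, ha x, smul_zero]
    · have e := hc x y z
      simp only [Pi.smul_apply, map_smul]
      linear_combination (norm := module) c • e

/-- The space of 2-coboundaries of `F_φ` with coefficients in the adjoint module. -/
def B2F (p : ℕ) (φ : ℕ → ℂ) : Submodule ℂ (V p → V p → V p) where
  carrier := {ψ | ∃ f : V p →ₗ[ℂ] V p,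
    ∀ x y, ψ x y = mu p φ x (f y) - mu p φ y (f x) - f (mu p φ x y)}
  add_mem' := by
    rintro ψ₁ ψ₂ ⟨f₁, h₁⟩ ⟨f₂, h₂⟩
    refine ⟨f₁ + f₂, fun x y => ?_⟩
    simp only [Pi.add_apply, h₁ x y, h₂ x y, map_add, LinearMap.add_apply]
    abel
  zero_mem' := ⟨0, by intro x y; simp⟩
  smul_mem' := by
    rintro c ψ ⟨f, h⟩
    refine ⟨c • f, fun x y => ?_⟩
    simp only [Pi.smul_apply, h x y, map_smul, LinearMap.smul_apply, smul_sub]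

/-- The 2-cochains of degree `k` with respect to the grading `gr`. -/
def degF (p : ℕ) (k : ℤ) : Submodule ℂ (V p → V p → V p) where
  carrier := {ψ | ∀ (a b : ℤ), ∀ x ∈ gr p a, ∀ y ∈ gr p b, ψ x y ∈ gr p (a + b + k)}
  add_mem' := by
    intro ψ₁ ψ₂ h₁ h₂ a b x hx y hy
    simpa using Submodule.add_mem _ (h₁ a b x hx y hy) (h₂ a b x hx y hy)
  zero_mem' := by intro a b x hx y hy; simp
  smul_mem' := by
    intro c ψ h a b x hx y hy
    simpa using Submodule.smul_mem _ c (h a b x hx y hy)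

/-- A bilinear map, viewed as a plain function. -/
def toF (p : ℕ) (B : Bil p) : V p → V p → V p := fun x y => B x y

lemma coordL_apply {p j : ℕ} (h1 : 1 ≤ j) (h2 : j ≤ 2*p) (x : V p) :
    coordL p j x = x ⟨j-1, by omega⟩ := by
  rw [coordL, dif_pos (by omega : j - 1 < 2*p)]; rfl

lemma X_apply {p m : ℕ} (i : Fin (2*p)) : X p m i = if (i : ℕ) + 1 = m then 1 else 0 := rfl

lemma coordL_X {p a m : ℕ} (h1 : 1 ≤ a) (h2 : a ≤ 2*p) :
    coordL p a (X p m) = if a = m then 1 else 0 := by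
  rw [coordL_apply h1 h2, X_apply]
  congr 1
  simp only [eq_iff_iff]; omega

lemma elem_apply {p a b : ℕ} (v : V p) (x y : V p) :
    elem p a b v x y
      = (coordL p a x * coordL p b y - coordL p b x * coordL p a y) • v := by
  simp [elem, sub_smul, mul_smul]

lemma mu_apply {p : ℕ} (φ : ℕ → ℂ) (x y : V p) :
    mu p φ x y = elem p 1 2 (-(X p 1)) x y +
      ∑ k ∈ Finset.Icc 1 (p-1),
        (elem p (2*k+1) (2*k+2) (-(X p 1)) x y
          + elem p 2 (2*k+1) (-(φ k) • X p (2*k+1)) x y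
          + elem p 2 (2*k+2) ((1 + φ k) • X p (2*k+2)) x y) := by
  simp [mu]

def lam (φ : ℕ → ℂ) (i : ℕ) : ℂ := if i % 2 = 0 then -(φ (i/2)) else 1 + φ (i/2)

lemma mu_coord1 {p : ℕ} (φ : ℕ → ℂ) (hp : 1 ≤ p) (x y : V p) :
    mu p φ x y ⟨1, by omega⟩ = 0 := by
  rw [mu_apply, Pi.add_apply, Finset.sum_apply]
  have h1 : elem p 1 2 (-(X p 1)) x y ⟨1, by omega⟩ = 0 := by
    rw [elem_apply]; simp [X_apply]
  rw [h1, zero_add]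
  apply Finset.sum_eq_zero
  intro k hk
  simp only [Finset.mem_Icc] at hk
  simp only [Pi.add_apply]
  rw [elem_apply, elem_apply, elem_apply]
  simp only [Pi.smul_apply, Pi.neg_apply, X_apply, smul_eq_mul]
  rw [if_neg (by omega), if_neg (by omega), if_neg (by omega)]
  ring

lemma mu_coord {p : ℕ} (φ : ℕ → ℂ) {i : ℕ} (h2 : 2 ≤ i) (hi : i < 2*p) (x y : V p) :
    mu p φ x y ⟨i, hi⟩
      = lam φ i * (x ⟨1, by omega⟩ * y ⟨i, hi⟩ - x ⟨i, hi⟩ * y ⟨1, by omega⟩) := by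
  have hp : 1 ≤ p := by omega
  rw [mu_apply, Pi.add_apply, Finset.sum_apply]
  have h1 : elem p 1 2 (-(X p 1)) x y ⟨i, hi⟩ = 0 := by
    rw [elem_apply]; simp only [Pi.smul_apply, Pi.neg_apply, X_apply, smul_eq_mul]
    rw [if_neg (by omega)]; ring
  rw [h1, zero_add]
  rw [Finset.sum_eq_single (i/2)]
  · set k := i/2 with hk
    simp only [Pi.add_apply]
    rw [elem_apply, elem_apply, elem_apply]
    simp only [Pi.smul_apply, Pi.neg_apply, X_apply, smul_eq_mul]
    rw [if_neg (by omega)]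
    rw [coordL_apply (j := 2) (by omega) (by omega) x,
        coordL_apply (j := 2) (by omega) (by omega) y]
    rcases Nat.mod_two_eq_zero_or_one i with he | ho
    · have hpar : i % 2 = 0 := he
      rw [if_pos (by omega), if_neg (by omega)]
      rw [coordL_apply (j := 2*k+1) (by omega) (by omega) x,
          coordL_apply (j := 2*k+1) (by omega) (by omega) y]
      have : 2*k+1-1 = i := by omega
      simp only [this]
      simp only [lam, if_pos hpar]
      push_cast
      norm_num
      ring
    · have hpar : i % 2 = 1 := ho
      rw [if_neg (by omega), if_pos (by omega)]
      rw [coordL_apply (j := 2*k+2) (by omega) (by omega) x,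
          coordL_apply (j := 2*k+2) (by omega) (by omega) y]
      have : 2*k+2-1 = i := by omega
      simp only [this]
      simp only [lam, hpar]
      norm_num
      ring
  · intro k hk hne
    simp only [Finset.mem_Icc] at hk
    simp only [Pi.add_apply]
    rw [elem_apply, elem_apply, elem_apply]
    simp only [Pi.smul_apply, Pi.neg_apply, X_apply, smul_eq_mul]
    rw [if_neg (by omega), if_neg (by omega), if_neg (by omega)]
    ring
  · intro h
    exact absurd (Finset.mem_Icc.mpr ⟨by omega, by omega⟩) h

lemma mu_X1 {p : ℕ} (φ : ℕ → ℂ) (hp : 1 ≤ p) (x : V p) :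
    mu p φ x (X p 1) = x ⟨1, by omega⟩ • X p 1 := by
  rw [mu_apply]
  have h1 : elem p 1 2 (-(X p 1)) x (X p 1) = x ⟨1, by omega⟩ • X p 1 := by
    rw [elem_apply, coordL_X (by omega) (by omega), coordL_X (by omega) (by omega),
      coordL_apply (j := 2) (by omega) (by omega) x]
    norm_num
  rw [h1]
  have h2 : ∀ k ∈ Finset.Icc 1 (p-1),
      (elem p (2*k+1) (2*k+2) (-(X p 1)) x (X p 1)
        + elem p 2 (2*k+1) (-(φ k) • X p (2*k+1)) x (X p 1)
        + elem p 2 (2*k+2) ((1 + φ k) • X p (2*k+2)) x (X p 1)) = 0 := by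
    intro k hk
    simp only [Finset.mem_Icc] at hk
    rw [elem_apply, elem_apply, elem_apply,
      coordL_X (a := 2*k+1) (by omega) (by omega),
      coordL_X (a := 2*k+2) (by omega) (by omega),
      coordL_X (a := 2) (by omega) (by omega)]
    rw [if_neg (by omega), if_neg (by omega), if_neg (by omega)]
    simp
  rw [Finset.sum_eq_zero h2, add_zero]

lemma psiTop_cocycle {p j : ℕ} (φ : ℕ → ℂ) (hj3 : 3 ≤ j) (hj : j ≤ 2*p) (x y z : V p) :
    mu p φ x (elem p 2 j (X p 1) y z) - mu p φ y (elem p 2 j (X p 1) x z)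
      + mu p φ z (elem p 2 j (X p 1) x y) - elem p 2 j (X p 1) (mu p φ x y) z
      + elem p 2 j (X p 1) (mu p φ x z) y - elem p 2 j (X p 1) (mu p φ y z) x = 0 := by
  have hp : 1 ≤ p := by omega
  have hJ : j - 1 < 2*p := by omega
  have hef : ∀ a b : V p, elem p 2 j (X p 1) a b
      = (a ⟨1, by omega⟩ * b ⟨j-1, hJ⟩ - a ⟨j-1, hJ⟩ * b ⟨1, by omega⟩) • X p 1 := by
    intro a b
    rw [elem_apply, coordL_apply (j := 2) (by omega) (by omega) a,
      coordL_apply (j := 2) (by omega) (by omega) b,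
      coordL_apply (j := j) (by omega) (by omega) a,
      coordL_apply (j := j) (by omega) (by omega) b]
  have hmu : ∀ a b c : V p, mu p φ a (elem p 2 j (X p 1) b c)
      = ((b ⟨1, by omega⟩ * c ⟨j-1, hJ⟩ - b ⟨j-1, hJ⟩ * c ⟨1, by omega⟩)
          * a ⟨1, by omega⟩) • X p 1 := by
    intro a b c
    rw [hef, map_smul, mu_X1 φ hp a, smul_smul]
  have hco : ∀ a b c : V p, elem p 2 j (X p 1) (mu p φ a b) c
      = (-(lam φ (j-1) * (a ⟨1, by omega⟩ * b ⟨j-1, hJ⟩ - a ⟨j-1, hJ⟩ * b ⟨1, by omega⟩))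
          * c ⟨1, by omega⟩) • X p 1 := by
    intro a b c
    rw [hef, mu_coord1 φ hp, mu_coord φ (by omega) hJ]
    ring_nf
  rw [hmu, hmu, hmu, hco, hco, hco]
  rw [← sub_smul, ← add_smul, ← sub_smul, ← add_smul, ← sub_smul]
  convert zero_smul ℂ (X p 1) using 2
  ring



lemma gr0_eq (p : ℕ) : gr p 0 = Submodule.span ℂ {X p 2} := by simp [gr]

lemma gr1_eq (p : ℕ) :
    gr p 1 = Submodule.span ℂ {v : V p | ∃ j, 3 ≤ j ∧ j ≤ 2*p ∧ v = X p j} := by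
  simp [gr]

lemma gr2_eq (p : ℕ) : gr p 2 = Submodule.span ℂ {X p 1} := by simp [gr]

lemma gr_bot {p : ℕ} {m : ℤ} (h0 : m ≠ 0) (h1 : m ≠ 1) (h2 : m ≠ 2) : gr p m = ⊥ := by
  simp [gr, h0, h1, h2]

lemma mem_gr0 {p : ℕ} {x : V p} (hx : x ∈ gr p 0) : ∃ c : ℂ, x = c • X p 2 := by
  rw [gr0_eq, Submodule.mem_span_singleton] at hx
  obtain ⟨c, hc⟩ := hx; exact ⟨c, hc.symm⟩

lemma mem_gr2 {p : ℕ} {x : V p} (hx : x ∈ gr p 2) : ∃ c : ℂ, x = c • X p 1 := by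
  rw [gr2_eq, Submodule.mem_span_singleton] at hx
  obtain ⟨c, hc⟩ := hx; exact ⟨c, hc.symm⟩

lemma mem_gr1_coord {p : ℕ} {x : V p} (hx : x ∈ gr p 1) {i : ℕ} (hi : i < 2*p)
    (hi2 : i ≤ 1) : x ⟨i, hi⟩ = 0 := by
  rw [gr1_eq] at hx
  have hle : Submodule.span ℂ {v : V p | ∃ j, 3 ≤ j ∧ j ≤ 2*p ∧ v = X p j}
      ≤ LinearMap.ker (LinearMap.proj (R := ℂ) (φ := fun _ : Fin (2*p) => ℂ) ⟨i, hi⟩) := by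
    rw [Submodule.span_le]
    rintro v ⟨m, hm3, hm2p, rfl⟩
    simp only [SetLike.mem_coe, LinearMap.mem_ker, LinearMap.proj_apply, X_apply]
    rw [if_neg (by omega)]
  exact hle hx

lemma X2_mem_gr0 (p : ℕ) : X p 2 ∈ gr p 0 := by
  rw [gr0_eq]; exact Submodule.mem_span_singleton_self _

lemma X1_mem_gr2 (p : ℕ) : X p 1 ∈ gr p 2 := by
  rw [gr2_eq]; exact Submodule.mem_span_singleton_self _

lemma X_mem_gr1 {p m : ℕ} (h3 : 3 ≤ m) (h2p : m ≤ 2*p) : X p m ∈ gr p 1 := by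
  rw [gr1_eq]; exact Submodule.subset_span ⟨m, h3, h2p, rfl⟩

lemma smul_X1_mem_gr2 {p : ℕ} (c : ℂ) : c • X p 1 ∈ gr p 2 := by
  rw [gr2_eq]; exact Submodule.smul_mem _ _ (Submodule.mem_span_singleton_self _)


lemma psiTop_apply {p j : ℕ} (hj3 : 3 ≤ j) (hj : j ≤ 2*p) (x y : V p) :
    psiTop p j x y
      = (x ⟨1, by omega⟩ * y ⟨j-1, by omega⟩ - x ⟨j-1, by omega⟩ * y ⟨1, by omega⟩)
          • X p 1 := by
  rw [psiTop, elem_apply, coordL_apply (j := 2) (by omega) (by omega) x,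
    coordL_apply (j := 2) (by omega) (by omega) y,
    coordL_apply (j := j) (by omega) (by omega) x,
    coordL_apply (j := j) (by omega) (by omega) y]

lemma psiTop_mem_Z2F {p j : ℕ} (φ : ℕ → ℂ) (hj3 : 3 ≤ j) (hj : j ≤ 2*p) :
    toF p (psiTop p j) ∈ Z2F p φ := by
  refine ⟨⟨?_, ?_, ?_, ?_⟩, ?_, ?_⟩
  · intro x x' y; simp [toF, map_add]
  · intro c x y; simp [toF, map_smul]
  · intro x y y'; simp [toF, map_add]
  · intro c x y; simp [toF, map_smul]
  · intro x
    show psiTop p j x x = 0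
    rw [psiTop_apply hj3 hj]
    convert zero_smul ℂ (X p 1) using 2
    ring
  · intro x y z
    exact psiTop_cocycle φ hj3 hj x y z

lemma psiTop_mem_deg {p j : ℕ} (hj3 : 3 ≤ j) (hj : j ≤ 2*p) :
    toF p (psiTop p j) ∈ degF p 1 := by
  have hJ : j - 1 < 2*p := by omega
  intro a b x hx y hy
  have hval : ∀ u w : V p, toF p (psiTop p j) u w
      = (u ⟨1, by omega⟩ * w ⟨j-1, hJ⟩ - u ⟨j-1, hJ⟩ * w ⟨1, by omega⟩) • X p 1 :=
    fun u w => psiTop_apply hj3 hj u w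
  have c0J : ∀ {u : V p}, u ∈ gr p 0 → u ⟨j-1, hJ⟩ = 0 := by
    rintro u hu
    obtain ⟨c, rfl⟩ := mem_gr0 hu
    simp only [Pi.smul_apply, X_apply, smul_eq_mul]
    rw [if_neg (by omega), mul_zero]
  have c21 : ∀ {u : V p}, u ∈ gr p 2 → u ⟨1, by omega⟩ = 0 := by
    rintro u hu
    obtain ⟨c, rfl⟩ := mem_gr2 hu
    simp only [Pi.smul_apply, X_apply, smul_eq_mul]
    rw [if_neg (by omega), mul_zero]
  have c2J : ∀ {u : V p}, u ∈ gr p 2 → u ⟨j-1, hJ⟩ = 0 := by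
    rintro u hu
    obtain ⟨c, rfl⟩ := mem_gr2 hu
    simp only [Pi.smul_apply, X_apply, smul_eq_mul]
    rw [if_neg (by omega), mul_zero]
  have c11 : ∀ {u : V p}, u ∈ gr p 1 → u ⟨1, by omega⟩ = 0 :=
    fun {u} hu => mem_gr1_coord hu _ (by omega)
  by_cases ha0 : a = 0
  · subst ha0
    by_cases hb0 : b = 0
    · subst hb0
      rw [hval, c0J hx, c0J hy]
      simp only [mul_zero, zero_mul, sub_self, sub_zero, zero_sub, neg_zero, zero_smul]
      exact zero_mem _
    by_cases hb1 : b = 1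
    · subst hb1
      rw [hval]
      exact smul_X1_mem_gr2 _
    by_cases hb2 : b = 2
    · subst hb2
      rw [hval, c21 hy, c2J hy]
      simp only [mul_zero, zero_mul, sub_self, sub_zero, zero_sub, neg_zero, zero_smul]
      exact zero_mem _
    · rw [gr_bot hb0 hb1 hb2, Submodule.mem_bot] at hy
      subst hy
      rw [hval]
      simp only [Pi.zero_apply]
      simp only [mul_zero, zero_mul, sub_self, sub_zero, zero_sub, neg_zero, zero_smul]
      exact zero_mem _
  by_cases ha1 : a = 1
  · subst ha1
    by_cases hb0 : b = 0
    · subst hb0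
      rw [hval]
      exact smul_X1_mem_gr2 _
    by_cases hb1 : b = 1
    · subst hb1
      rw [hval, c11 hx, c11 hy]
      simp only [mul_zero, zero_mul, sub_self, sub_zero, zero_sub, neg_zero, zero_smul]
      exact zero_mem _
    by_cases hb2 : b = 2
    · subst hb2
      rw [hval, c11 hx, c21 hy]
      simp only [mul_zero, zero_mul, sub_self, sub_zero, zero_sub, neg_zero, zero_smul]
      exact zero_mem _
    · rw [gr_bot hb0 hb1 hb2, Submodule.mem_bot] at hy
      subst hy
      rw [hval]
      simp only [Pi.zero_apply]
      simp only [mul_zero, zero_mul, sub_self, sub_zero, zero_sub, neg_zero, zero_smul]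
      exact zero_mem _
  by_cases ha2 : a = 2
  · subst ha2
    rw [hval, c21 hx, c2J hx]
    simp only [mul_zero, zero_mul, sub_self, sub_zero, zero_sub, neg_zero, zero_smul]
    exact zero_mem _
  · rw [gr_bot ha0 ha1 ha2, Submodule.mem_bot] at hx
    subst hx
    rw [hval]
    simp only [Pi.zero_apply, mul_zero, zero_mul, sub_self, zero_smul]
    exact zero_mem _


lemma psiTop_X {p m a b : ℕ} (hm1 : 1 ≤ m) (hm : m ≤ 2*p) (hp : 1 ≤ p) :
    psiTop p m (X p a) (X p b)
      = ((if 2 = a then (1:ℂ) else 0) * (if m = b then 1 else 0)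
          - (if m = a then 1 else 0) * (if 2 = b then 1 else 0)) • X p 1 := by
  have h2 : coordL p 2 (X p a) = if 2 = a then (1:ℂ) else 0 :=
    coordL_X (by omega) (by omega)
  have h2' : coordL p 2 (X p b) = if 2 = b then (1:ℂ) else 0 :=
    coordL_X (by omega) (by omega)
  have hma : coordL p m (X p a) = if m = a then (1:ℂ) else 0 := coordL_X hm1 hm
  have hmb : coordL p m (X p b) = if m = b then (1:ℂ) else 0 := coordL_X hm1 hm
  rw [psiTop, elem_apply, h2, h2', hma, hmb]

lemma isBil_skew {p : ℕ} {ψ : V p → V p → V p} (hb : IsBil p ψ)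
    (halt : ∀ x, ψ x x = 0) (x y : V p) : ψ y x = - ψ x y := by
  have h := halt (x + y)
  rw [hb.1, hb.2.2.1, hb.2.2.1, halt x, halt y, zero_add, add_zero] at h
  exact eq_neg_of_add_eq_zero_right h

lemma X_single {p : ℕ} (i : Fin (2*p)) : X p ((i:ℕ)+1) = Pi.single i 1 := by
  funext i'
  rw [X_apply, Pi.single_apply]
  by_cases h : i' = i
  · subst h; rw [if_pos rfl, if_pos rfl]
  · rw [if_neg (fun hc => h (Fin.ext (by omega))), if_neg h]

lemma rev_incl {p : ℕ} (hp : 2 ≤ p) (φ : ℕ → ℂ) :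
    Z2F p φ ⊓ degF p 1
      ≤ Submodule.span ℂ
          {ψ : V p → V p → V p | ∃ j, 3 ≤ j ∧ j ≤ 2*p ∧ ψ = toF p (psiTop p j)} := by
  rintro ψ ⟨⟨hbil, halt, _⟩, hdeg⟩
  have h2p : 4 ≤ 2*p := by omega
  set c : ℕ → ℂ := fun m => ψ (X p 2) (X p m) ⟨0, by omega⟩ with hc
  set B : Bil p := LinearMap.mk₂ ℂ ψ hbil.1 hbil.2.1 hbil.2.2.1 hbil.2.2.2 with hB
  set B' : Bil p := ∑ i ∈ Finset.univ.filter (fun i : Fin (2*p) => 2 ≤ (i:ℕ)),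
      c ((i:ℕ)+1) • psiTop p ((i:ℕ)+1) with hB'
  -- value of ψ on (X_2, X_m), m ≥ 3
  have hval : ∀ j : Fin (2*p), 2 ≤ (j:ℕ) →
      ψ (X p 2) (X p ((j:ℕ)+1)) = c ((j:ℕ)+1) • X p 1 := by
    intro j hj
    have hmem := hdeg 0 1 _ (X2_mem_gr0 p) _
      (X_mem_gr1 (by omega) (by omega : (j:ℕ)+1 ≤ 2*p))
    rw [show ((0:ℤ)+1+1) = 2 by norm_num] at hmem
    obtain ⟨d, hd⟩ := mem_gr2 hmem
    have hcd : c ((j:ℕ)+1) = d := by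
      rw [hc]
      simp only [hd, Pi.smul_apply, X_apply, smul_eq_mul]
      norm_num
    rw [hd, hcd]
  -- ψ vanishes when the first argument is X_1
  have hz1 : ∀ (b : ℤ) (y : V p), y ∈ gr p b → ψ (X p 1) y = 0 := by
    intro b y hy
    by_cases hb0 : b = 0
    · subst hb0
      have := hdeg 2 0 _ (X1_mem_gr2 p) _ hy
      rwa [show ((2:ℤ)+0+1) = 3 by norm_num,
        gr_bot (by norm_num) (by norm_num) (by norm_num), Submodule.mem_bot] at this
    by_cases hb1 : b = 1
    · subst hb1
      have := hdeg 2 1 _ (X1_mem_gr2 p) _ hy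
      rwa [show ((2:ℤ)+1+1) = 4 by norm_num,
        gr_bot (by norm_num) (by norm_num) (by norm_num), Submodule.mem_bot] at this
    by_cases hb2 : b = 2
    · subst hb2
      have := hdeg 2 2 _ (X1_mem_gr2 p) _ hy
      rwa [show ((2:ℤ)+2+1) = 5 by norm_num,
        gr_bot (by norm_num) (by norm_num) (by norm_num), Submodule.mem_bot] at this
    · rw [gr_bot hb0 hb1 hb2, Submodule.mem_bot] at hy
      subst hy
      have h0 := hbil.2.2.2 0 (X p 1) 0
      rw [zero_smul, zero_smul] at h0
      exact h0
  have hzg1 : ∀ x y : V p, x ∈ gr p 1 → y ∈ gr p 1 → ψ x y = 0 := by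
    intro x y hx hy
    have := hdeg 1 1 _ hx _ hy
    rwa [show ((1:ℤ)+1+1) = 3 by norm_num,
      gr_bot (by norm_num) (by norm_num) (by norm_num), Submodule.mem_bot] at this
  -- B = B' via values on the standard basis
  have hBB' : B = B' := by
    apply LinearMap.ext_basis (Pi.basisFun ℂ (Fin (2*p))) (Pi.basisFun ℂ (Fin (2*p)))
    intro i j
    rw [Pi.basisFun_apply, Pi.basisFun_apply, ← X_single, ← X_single]
    have hRHS : ∀ i' ∈ Finset.univ.filter (fun i' : Fin (2*p) => 2 ≤ (i':ℕ)),
        (c ((i':ℕ)+1) • psiTop p ((i':ℕ)+1)) (X p ((i:ℕ)+1)) (X p ((j:ℕ)+1))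
          = (c ((i':ℕ)+1) * ((if 2 = (i:ℕ)+1 then (1:ℂ) else 0)
              * (if (i':ℕ)+1 = (j:ℕ)+1 then 1 else 0)
            - (if (i':ℕ)+1 = (i:ℕ)+1 then 1 else 0)
              * (if 2 = (j:ℕ)+1 then 1 else 0))) • X p 1 := by
      intro i' hi'
      simp only [Finset.mem_filter] at hi'
      rw [LinearMap.smul_apply, LinearMap.smul_apply,
        psiTop_X (by omega) (by omega) (by omega), smul_smul]
    have hBapp : B (X p ((i:ℕ)+1)) (X p ((j:ℕ)+1)) = ψ (X p ((i:ℕ)+1)) (X p ((j:ℕ)+1)) := rfl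
    rw [hB', LinearMap.sum_apply, LinearMap.sum_apply, Finset.sum_congr rfl hRHS, hBapp]
    by_cases hi1 : (i:ℕ) = 1
    · by_cases hj2 : 2 ≤ (j:ℕ)
      · -- ψ(X2, X_{j+1}) = c (j+1) • X1
        rw [show ((i:ℕ)+1) = 2 by omega, hval j hj2]
        rw [Finset.sum_eq_single j]
        · rw [show (if (2:ℕ) = 2 then (1:ℂ) else 0) = 1 from if_pos rfl,
            show (if (j:ℕ)+1 = (j:ℕ)+1 then (1:ℂ) else 0) = 1 from if_pos rfl,
            show (if (j:ℕ)+1 = 2 then (1:ℂ) else 0) = 0 from if_neg (by omega)]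
          norm_num
        · intro i' hi' hne
          simp only [Finset.mem_filter] at hi'
          have hnv : (i':ℕ) ≠ (j:ℕ) := fun h => hne (Fin.ext h)
          rw [show (if (i':ℕ)+1 = (j:ℕ)+1 then (1:ℂ) else 0) = 0 from if_neg (by omega),
            show (if 2 = (j:ℕ)+1 then (1:ℂ) else 0) = 0 from if_neg (by omega)]
          simp
        · intro hcontra
          exact absurd (Finset.mem_filter.mpr ⟨Finset.mem_univ j, hj2⟩) hcontra
      · -- j = 0 or 1
        rw [Finset.sum_eq_zero]
        · by_cases hj0 : (j:ℕ) = 0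
          · rw [show ((j:ℕ)+1) = 1 by omega]
            rw [isBil_skew hbil halt (X p 1) (X p ((i:ℕ)+1)),
              hz1 0 _ (by rw [show ((i:ℕ)+1) = 2 by omega]; exact X2_mem_gr0 p), neg_zero]
          · have hj1 : (j:ℕ) = 1 := by omega
            rw [show ((i:ℕ)+1) = 2 by omega, show ((j:ℕ)+1) = 2 by omega]
            exact halt _
        · intro i' hi'
          simp only [Finset.mem_filter] at hi'
          rw [show (if (i':ℕ)+1 = (j:ℕ)+1 then (1:ℂ) else 0) = 0 from if_neg (by omega),
            show (if (i':ℕ)+1 = (i:ℕ)+1 then (1:ℂ) else 0) = 0 from if_neg (by omega)]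
          simp
    · by_cases hi0 : (i:ℕ) = 0
      · -- first argument X_1
        rw [Finset.sum_eq_zero]
        · rw [show ((i:ℕ)+1) = 1 by omega]
          by_cases hj0 : (j:ℕ) = 0
          · exact hz1 2 _ (by rw [show ((j:ℕ)+1) = 1 by omega]; exact X1_mem_gr2 p)
          · by_cases hj1 : (j:ℕ) = 1
            · exact hz1 0 _ (by rw [show ((j:ℕ)+1) = 2 by omega]; exact X2_mem_gr0 p)
            · exact hz1 1 _ (X_mem_gr1 (by omega) (by omega))
        · intro i' hi'
          simp only [Finset.mem_filter] at hi'
          rw [show (if 2 = (i:ℕ)+1 then (1:ℂ) else 0) = 0 from if_neg (by omega),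
            show (if (i':ℕ)+1 = (i:ℕ)+1 then (1:ℂ) else 0) = 0 from if_neg (by omega)]
          simp
      · -- now 2 ≤ i
        have hi2 : 2 ≤ (i:ℕ) := by omega
        by_cases hj1 : (j:ℕ) = 1
        · -- ψ(X_{i+1}, X_2) = -c(i+1) • X1
          rw [show ((j:ℕ)+1) = 2 by omega,
            isBil_skew hbil halt (X p 2) (X p ((i:ℕ)+1)), hval i hi2]
          rw [Finset.sum_eq_single i]
          · rw [show (if (2:ℕ) = 2 then (1:ℂ) else 0) = 1 from if_pos rfl]
            rw [show (if 2 = (i:ℕ)+1 then (1:ℂ) else 0) = 0 from if_neg (by omega)]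
            simp
          · intro i' hi' hne
            simp only [Finset.mem_filter] at hi'
            have hnv : (i':ℕ) ≠ (i:ℕ) := fun h => hne (Fin.ext h)
            rw [show (if 2 = (i:ℕ)+1 then (1:ℂ) else 0) = 0 from if_neg (by omega),
              show (if (i':ℕ)+1 = (i:ℕ)+1 then (1:ℂ) else 0) = 0 from if_neg (by omega)]
            simp
          · intro hcontra
            exact absurd (Finset.mem_filter.mpr ⟨Finset.mem_univ i, hi2⟩) hcontra
        · rw [Finset.sum_eq_zero]
          · by_cases hj0 : (j:ℕ) = 0
            · rw [isBil_skew hbil halt (X p ((j:ℕ)+1)) (X p ((i:ℕ)+1)),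
                show ((j:ℕ)+1) = 1 by omega,
                hz1 1 _ (X_mem_gr1 (by omega) (by omega)), neg_zero]
            · exact hzg1 _ _ (X_mem_gr1 (by omega) (by omega))
                (X_mem_gr1 (by omega) (by omega))
          · intro i' hi'
            simp only [Finset.mem_filter] at hi'
            rw [show (if 2 = (i:ℕ)+1 then (1:ℂ) else 0) = 0 from if_neg (by omega),
              show (if 2 = (j:ℕ)+1 then (1:ℂ) else 0) = 0 from if_neg (by omega)]
            simp
  -- conclude
  have hpsiB : ψ = toF p B' := by
    rw [← hBB']
    rfl
  rw [hpsiB]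
  have hsum : toF p B' = ∑ i ∈ Finset.univ.filter (fun i : Fin (2*p) => 2 ≤ (i:ℕ)),
      c ((i:ℕ)+1) • toF p (psiTop p ((i:ℕ)+1)) := by
    funext x y
    rw [hB']
    simp [toF, LinearMap.sum_apply, Finset.sum_apply]
  rw [hsum]
  apply Submodule.sum_mem
  intro i hi
  simp only [Finset.mem_filter] at hi
  exact Submodule.smul_mem _ _
    (Submodule.subset_span ⟨(i:ℕ)+1, by omega, by omega, rfl⟩)

/-- if `φ` avoids `Ω` then `dim Z²_1 = 2(p−1)`, spanned by the
cochains `ψ^1_{2,j}` (`3 ≤ j ≤ 2p`), `ψ^1_{2,j}(X_2, X_j) = X_1`. -/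
theorem stmt14 (p : ℕ) (hp : 2 ≤ p) (φ : ℕ → ℂ) (hΩ : AvoidsOmega p φ) :
    Module.finrank ℂ ↥(Z2F p φ ⊓ degF p 1) = 2*(p-1) ∧
    Z2F p φ ⊓ degF p 1
      = Submodule.span ℂ
          {ψ : V p → V p → V p | ∃ j, 3 ≤ j ∧ j ≤ 2*p ∧ ψ = toF p (psiTop p j)} := by
  have h2p : 4 ≤ 2*p := by omega
  have hspan : Z2F p φ ⊓ degF p 1
      = Submodule.span ℂ
          {ψ : V p → V p → V p | ∃ j, 3 ≤ j ∧ j ≤ 2*p ∧ ψ = toF p (psiTop p j)} := by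
    refine le_antisymm (rev_incl hp φ) ?_
    rw [Submodule.span_le]
    rintro ψ ⟨j, hj3, hj, rfl⟩
    exact Submodule.mem_inf.mpr ⟨psiTop_mem_Z2F φ hj3 hj, psiTop_mem_deg hj3 hj⟩
  refine ⟨?_, hspan⟩
  -- the family indexed by `Fin (2p-2)`
  set v : Fin (2*p-2) → (V p → V p → V p) :=
    fun i => toF p (psiTop p ((i:ℕ)+3)) with hv
  have hsetr : {ψ : V p → V p → V p | ∃ j, 3 ≤ j ∧ j ≤ 2*p ∧ ψ = toF p (psiTop p j)}
      = Set.range v := by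
    ext ψ
    constructor
    · rintro ⟨j, hj3, hj, rfl⟩
      refine ⟨⟨j-3, by omega⟩, ?_⟩
      show toF p (psiTop p ((j-3)+3)) = toF p (psiTop p j)
      rw [show j-3+3 = j by omega]
    · rintro ⟨i, rfl⟩
      exact ⟨(i:ℕ)+3, by omega, by have := i.isLt; omega, rfl⟩
  have hval : ∀ (i i0 : Fin (2*p-2)),
      v i (X p 2) (X p ((i0:ℕ)+3)) ⟨0, by omega⟩ = if i = i0 then 1 else 0 := by
    intro i i0
    have hi := i.isLt
    have hi0 := i0.isLt
    show psiTop p ((i:ℕ)+3) (X p 2) (X p ((i0:ℕ)+3)) ⟨0, by omega⟩ = _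
    rw [psiTop_X (by omega) (by omega) (by omega)]
    simp only [Pi.smul_apply, X_apply, smul_eq_mul]
    rw [show (if (i:ℕ)+3 = 2 then (1:ℂ) else 0) = 0 from if_neg (by omega)]
    by_cases h : i = i0
    · subst h
      simp
    · rw [show (if (i:ℕ)+3 = (i0:ℕ)+3 then (1:ℂ) else 0) = 0
          from if_neg (fun hc => h (Fin.ext (by omega))), if_neg h]
      simp
  have hli : LinearIndependent ℂ v := by
    rw [Fintype.linearIndependent_iff]
    intro g hg i0
    have h0 := congrFun (congrFun (congrFun hg (X p 2)) (X p ((i0:ℕ)+3)))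
      (⟨0, by omega⟩ : Fin (2*p))
    simp only [Finset.sum_apply, Pi.smul_apply, Pi.zero_apply, smul_eq_mul] at h0
    rw [Finset.sum_congr rfl (fun i _ => by rw [hval i i0])] at h0
    simp only [mul_ite, mul_one, mul_zero, Finset.sum_ite_eq', Finset.mem_univ,
      if_true] at h0
    exact h0
  rw [hspan, hsetr]
  rw [finrank_span_eq_card hli, Fintype.card_fin]
  omega
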